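/- Let d ≥ 1. For every (s_1,…,s_d) ∈ ℂ^d in the region (R), i.e. with Re(s_k + ⋯ + s_d) > d − k + 1 for every k = 1,…,d, the family of complex numbers ∏_{k=1}^d |f_k|^{-s_k}, indexed by all d-tuples (f_1,…,f_d) of monic polynomials in F_q[T] with deg(f_1) ≤ ⋯ ≤ deg(f_d), is absolutely summable; that is, the multiple zeta function Z_d(F_q[T]; s_1,…,s_d) converges absolutely on (R). -/

import Mathlib

set_option maxHeartbeats 1000000

open Finset Polynomial

-- number of monic polynomials of degree n is at most q^n
lemma aux_card_monic_le (F : Type*) [Field F] [Fintype F] [DecidableEq F] (n : ℕ)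
    (S : Finset {p : Polynomial F // p.Monic}) (hS : ∀ p ∈ S, p.1.natDegree = n) :
    S.card ≤ Fintype.card F ^ n := by
  have h := Finset.card_le_card_of_injOn
      (f := fun p : {p : Polynomial F // p.Monic} => fun i : Fin n => p.1.coeff i)
      (t := (Finset.univ : Finset (Fin n → F)))
      (fun p _ => Finset.mem_univ _) ?_ (s := S)
  · calc S.card ≤ (Finset.univ : Finset (Fin n → F)).card := h
      _ = Fintype.card F ^ n := by
          rw [Finset.card_univ, Fintype.card_fun, Fintype.card_fin]
  · intro p hp p' hp' hcoef
    ext i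
    rcases lt_trichotomy i n with hi | hi | hi
    · exact congrFun hcoef ⟨i, hi⟩
    · subst hi
      rw [← hS p hp, Polynomial.Monic.coeff_natDegree p.2,
        hS p hp, ← hS p' hp', Polynomial.Monic.coeff_natDegree p'.2]
    · rw [Polynomial.coeff_eq_zero_of_natDegree_lt (by rw [hS p hp]; exact hi),
        Polynomial.coeff_eq_zero_of_natDegree_lt (by rw [hS p' hp']; exact hi)]

lemma aux_summable_monic (F : Type*) [Field F] [Fintype F] {r : ℝ} (hr : 0 ≤ r)
    (hqr : (Fintype.card F : ℝ) * r < 1) :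
    Summable fun p : {p : Polynomial F // p.Monic} => r ^ p.1.natDegree := by
  classical
  have hqr0 : 0 ≤ (Fintype.card F : ℝ) * r := by positivity
  have hgeo : Summable fun n : ℕ => ((Fintype.card F : ℝ) * r) ^ n :=
    summable_geometric_of_lt_one hqr0 hqr
  apply summable_of_sum_le (c := ∑' n : ℕ, ((Fintype.card F : ℝ) * r) ^ n)
  · intro p; positivity
  · intro u
    have hgroup := Finset.sum_fiberwise_of_maps_to
      (g := fun p : {p : Polynomial F // p.Monic} => p.1.natDegree)
      (t := u.image fun p => p.1.natDegree)
      (fun x hx => Finset.mem_image_of_mem _ hx)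
      (f := fun p => r ^ p.1.natDegree)
    rw [← hgroup]
    calc ∑ n ∈ u.image (fun p => p.1.natDegree),
          ∑ p ∈ u.filter (fun p => p.1.natDegree = n), r ^ p.1.natDegree
        ≤ ∑ n ∈ u.image (fun p => p.1.natDegree), ((Fintype.card F : ℝ) * r) ^ n := by
          apply Finset.sum_le_sum
          intro n _
          have : ∑ p ∈ u.filter (fun p => p.1.natDegree = n), r ^ p.1.natDegree
              = (u.filter (fun p => p.1.natDegree = n)).card * r ^ n := by
            rw [Finset.sum_congr rfl (fun p hp => by
              rw [(Finset.mem_filter.mp hp).2]), Finset.sum_const, nsmul_eq_mul]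
          rw [this, mul_pow]
          gcongr ?_ * ?_
          · calc ((u.filter (fun p => p.1.natDegree = n)).card : ℝ)
                ≤ ((Fintype.card F ^ n : ℕ) : ℝ) := by
                  exact_mod_cast aux_card_monic_le F n _
                    (fun p hp => (Finset.mem_filter.mp hp).2)
              _ = (Fintype.card F : ℝ) ^ n := by push_cast; ring
      _ ≤ ∑' n : ℕ, ((Fintype.card F : ℝ) * r) ^ n :=
          hgeo.sum_le_tsum _ (fun n _ => by positivity)


lemma aux_summable_pi {β : Type*} (w : β → ℝ) (hw0 : ∀ b, 0 ≤ w b) (hw : Summable w) :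
    ∀ d : ℕ, Summable fun g : Fin d → β => ∏ i, w (g i) := by
  intro d
  induction d with
  | zero => exact Summable.of_finite
  | succ d ih =>
    have hmul : Summable fun p : β × (Fin d → β) => w p.1 * ∏ i, w (p.2 i) := by
      apply Summable.mul_of_nonneg hw ih hw0
      intro g
      exact Finset.prod_nonneg fun i _ => hw0 _
    have := (Equiv.summable_iff (Fin.consEquiv fun _ : Fin (d + 1) => β).symm).mpr hmul
    simpa [Fin.prod_univ_succ, Function.comp_def, Fin.consEquiv, Fin.tail] using this

lemma aux_abel (d : ℕ) (a : ℕ → ℝ) (M : ℕ → ℝ) (hM : ∀ j, j < d → 0 ≤ M j)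
    (ε : ℝ) (hT : ∀ j, (hj : j < d) → (d : ℝ) - j + ε ≤ ∑ k ∈ Finset.Ico j d, a k) :
    (∑ k ∈ Finset.range d, ∑ j ∈ Finset.range (k + 1), M j)
      + ε * (∑ j ∈ Finset.range d, M j)
      ≤ ∑ k ∈ Finset.range d, (∑ j ∈ Finset.range (k + 1), M j) * a k := by
  have hmem : ∀ (k j : ℕ), k ∈ Finset.range d ∧ j ∈ Finset.range (k + 1)
      ↔ k ∈ Finset.Ico j d ∧ j ∈ Finset.range d := by
    intro k j
    simp only [Finset.mem_range, Finset.mem_Ico]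
    omega
  have swap : ∀ f : ℕ → ℕ → ℝ,
      ∑ k ∈ Finset.range d, ∑ j ∈ Finset.range (k + 1), f k j
        = ∑ j ∈ Finset.range d, ∑ k ∈ Finset.Ico j d, f k j := by
    intro f
    exact Finset.sum_comm' hmem
  rw [swap (fun k j => M j)]
  have hrhs : ∑ k ∈ Finset.range d, (∑ j ∈ Finset.range (k + 1), M j) * a k
      = ∑ j ∈ Finset.range d, M j * ∑ k ∈ Finset.Ico j d, a k := by
    simp_rw [Finset.sum_mul]
    rw [swap (fun k j => M j * a k)]
    simp_rw [← Finset.mul_sum]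
  rw [hrhs]
  have hstep : ∀ j ∈ Finset.range d,
      (∑ k ∈ Finset.Ico j d, M j) + ε * M j ≤ M j * ∑ k ∈ Finset.Ico j d, a k := by
    intro j hj
    rw [Finset.mem_range] at hj
    have hMj := hM j hj
    calc (∑ k ∈ Finset.Ico j d, M j) + ε * M j
        = M j * (((d : ℝ) - j) + ε) := by
          rw [Finset.sum_const, Nat.card_Ico, nsmul_eq_mul]
          push_cast [Nat.cast_sub hj.le]
          ring
      _ ≤ M j * ∑ k ∈ Finset.Ico j d, a k := by
          exact mul_le_mul_of_nonneg_left (hT j hj) hMj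
  calc (∑ j ∈ Finset.range d, ∑ k ∈ Finset.Ico j d, M j) + ε * ∑ j ∈ Finset.range d, M j
      = ∑ j ∈ Finset.range d, ((∑ k ∈ Finset.Ico j d, M j) + ε * M j) := by
        rw [Finset.sum_add_distrib, Finset.mul_sum]
    _ ≤ ∑ j ∈ Finset.range d, M j * ∑ k ∈ Finset.Ico j d, a k :=
        Finset.sum_le_sum hstep

/-- For `d ≥ 1` and `(s_1,…,s_d) ∈ ℂ^d` in the region (R)
(`Re(s_k + ⋯ + s_d) > d − k + 1` for all `k`), the family
`∏_{k=1}^d |f_k|^{-s_k}`, indexed by `d`-tuples of monic polynomials in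
`F_q[T]` with nondecreasing degrees, is absolutely summable. -/
theorem multiple_zeta_FqT_abs_summable
    (F : Type*) [Field F] [Fintype F] (d : ℕ) (hd : 1 ≤ d)
    (s : Fin d → ℂ)
    (hs : ∀ k : Fin d, (d : ℝ) - (k.val : ℝ) < (∑ j ∈ Finset.Ici k, s j).re) :
    Summable fun f : {f : Fin d → Polynomial F //
        (∀ k, (f k).Monic) ∧ Monotone fun k => (f k).natDegree} =>
      ‖∏ k : Fin d, ((Fintype.card F : ℂ) ^ (f.1 k).natDegree : ℂ) ^ (-(s k))‖ := by
  classical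
  have hq1 : (1 : ℝ) < (Fintype.card F : ℝ) := by exact_mod_cast Fintype.one_lt_card
  have hq0 : (0 : ℝ) < (Fintype.card F : ℝ) := lt_trans one_pos hq1
  have hne : Nonempty (Fin d) := ⟨⟨0, hd⟩⟩
  set Q : ℝ := (Fintype.card F : ℝ) with hQdef
  -- the margin ε
  set ε : ℝ := Finset.univ.inf' Finset.univ_nonempty
    (fun k : Fin d => (∑ j ∈ Finset.Ici k, s j).re - ((d : ℝ) - (k.val : ℝ))) with hεdef
  have hε : 0 < ε := by
    rw [hεdef, Finset.lt_inf'_iff]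
    exact fun k _ => sub_pos.mpr (hs k)
  have hεle : ∀ k : Fin d,
      ε ≤ (∑ j ∈ Finset.Ici k, s j).re - ((d : ℝ) - (k.val : ℝ)) :=
    fun k => Finset.inf'_le _ (Finset.mem_univ k)
  have hd0 : (0 : ℝ) < (d : ℝ) := by exact_mod_cast hd
  set δ : ℝ := ε / d with hδdef
  have hδ : 0 < δ := div_pos hε hd0
  set r : ℝ := Q ^ (-(1 + δ)) with hrdef
  have hr0 : 0 < r := Real.rpow_pos_of_pos hq0 _
  have hqr : Q * r < 1 := by
    have h1 : Q * r = Q ^ ((1 : ℝ) + -(1 + δ)) := by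
      rw [Real.rpow_add hq0, Real.rpow_one, hrdef]
    have h2 : (1 : ℝ) + -(1 + δ) = -δ := by ring
    rw [h1, h2]
    exact Real.rpow_lt_one_of_one_lt_of_neg hq1 (neg_lt_zero.mpr hδ)
  -- summability of the comparison function
  have hw : Summable fun p : {p : Polynomial F // p.Monic} => r ^ p.1.natDegree :=
    aux_summable_monic F hr0.le hqr
  have hpi := aux_summable_pi (fun p : {p : Polynomial F // p.Monic} =>
    r ^ p.1.natDegree) (fun p => pow_nonneg hr0.le _) hw d
  have hG : Summable fun f : {f : Fin d → Polynomial F //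
      (∀ k, (f k).Monic) ∧ Monotone fun k => (f k).natDegree} =>
      ∏ k : Fin d, r ^ (f.1 k).natDegree := by
    have hinj : Function.Injective
        (fun f : {f : Fin d → Polynomial F //
          (∀ k, (f k).Monic) ∧ Monotone fun k => (f k).natDegree} =>
          (fun k => (⟨f.1 k, f.2.1 k⟩ : {p : Polynomial F // p.Monic}))) := by
      intro f g h
      apply Subtype.ext
      funext k
      exact congrArg Subtype.val (congrFun h k)
    refine (hpi.comp_injective hinj).congr fun f => ?_
    simp only [Function.comp_apply]
  -- comparison
  apply Summable.of_nonneg_of_le (fun f => norm_nonneg _) _ hG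
  rintro ⟨f, hmonic, hmono⟩
  set n : Fin d → ℕ := fun k => (f k).natDegree with hn
  -- rewrite LHS as a single rpow
  have hLHS : ‖∏ k : Fin d, ((Fintype.card F : ℂ) ^ (f k).natDegree : ℂ) ^ (-(s k))‖
      = Q ^ (∑ k : Fin d, (n k : ℝ) * (-(s k)).re) := by
    rw [norm_prod, Real.rpow_sum_of_pos hq0]
    apply Finset.prod_congr rfl
    intro k _
    have hbase : ((Fintype.card F : ℂ) ^ (f k).natDegree : ℂ)
        = ((Fintype.card F ^ n k : ℕ) : ℂ) := by push_cast; rfl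
    rw [hbase, Complex.norm_natCast_cpow_of_pos (pow_pos Fintype.card_pos _)]
    rw [Nat.cast_pow, ← hQdef, ← Real.rpow_natCast Q (n k), ← Real.rpow_mul hq0.le]
  have hRHS : (∏ k : Fin d, r ^ (f k).natDegree)
      = Q ^ (∑ k : Fin d, (-(1 + δ)) * (n k : ℝ)) := by
    rw [Real.rpow_sum_of_pos hq0]
    apply Finset.prod_congr rfl
    intro k _
    rw [Real.rpow_mul hq0.le, ← hrdef, Real.rpow_natCast]
  rw [hLHS]
  show Q ^ (∑ k : Fin d, (n k : ℝ) * (-(s k)).re) ≤ ∏ k : Fin d, r ^ (f k).natDegree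
  rw [hRHS, Real.rpow_le_rpow_left_iff hq1]
  -- reduce to the key real inequality
  have hkey : (1 + δ) * (∑ k : Fin d, (n k : ℝ)) ≤ ∑ k : Fin d, (n k : ℝ) * (s k).re := by
    have hL : d - 1 < d := by omega
    set L : Fin d := ⟨d - 1, hL⟩ with hLdef
    set N : ℕ → ℝ := fun j => if h : j < d then (n ⟨j, h⟩ : ℝ) else (n L : ℝ) with hNdef
    set P : ℕ → ℝ := fun j => if j = 0 then 0 else N (j - 1) with hPdef
    set a : ℕ → ℝ := fun j => if h : j < d then (s ⟨j, h⟩).re else 0 with hadef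
    have hPsucc : ∀ j : ℕ, P (j + 1) = N j := by
      intro j; rw [hPdef]; simp
    have hP0 : P 0 = 0 := by rw [hPdef]; simp
    have hNval : ∀ (j : ℕ) (h : j < d), N j = (n ⟨j, h⟩ : ℝ) := by
      intro j h; rw [hNdef]; exact dif_pos h
    have hMnn : ∀ j, j < d → 0 ≤ P (j + 1) - P j := by
      intro j hj
      rw [hPsucc, hNval j hj]
      rcases Nat.eq_zero_or_pos j with h0 | h0
      · subst h0; rw [hP0, sub_zero]; positivity
      · have hj1 : j - 1 < d := by omega
        have : P j = N (j - 1) := by rw [hPdef]; simp [Nat.pos_iff_ne_zero.mp h0]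
        rw [this, hNval _ hj1, sub_nonneg, Nat.cast_le]
        exact hmono (Fin.mk_le_mk.mpr (by omega))
    have hT : ∀ j, (hj : j < d) → (d : ℝ) - j + ε ≤ ∑ k ∈ Finset.Ico j d, a k := by
      intro j hj
      have hsum : ∑ k ∈ Finset.Ico j d, a k
          = ∑ k ∈ Finset.Ici (⟨j, hj⟩ : Fin d), (s k).re := by
        refine Finset.sum_bij'
          (fun (k : ℕ) (hk : k ∈ Finset.Ico j d) =>
            (⟨k, (Finset.mem_Ico.mp hk).2⟩ : Fin d))
          (fun (k : Fin d) _ => (k.val : ℕ)) ?hi ?hj ?li ?ri ?hf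
        case hi =>
          intro k hk
          exact Finset.mem_Ici.mpr (Fin.mk_le_mk.mpr (Finset.mem_Ico.mp hk).1)
        case hj =>
          intro k hk
          exact Finset.mem_Ico.mpr ⟨Fin.le_def.mp (Finset.mem_Ici.mp hk), k.isLt⟩
        case li => intro k hk; rfl
        case ri => intro k hk; rfl
        case hf =>
          intro k hk
          simp only [hadef]
          rw [dif_pos (Finset.mem_Ico.mp hk).2]
      rw [hsum, ← Complex.re_sum]
      have := hεle ⟨j, hj⟩
      simp only at this ⊢
      linarith
    have habel := aux_abel d a (fun j => P (j + 1) - P j) hMnn ε hT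
    have htel : ∀ k : ℕ, (∑ j ∈ Finset.range (k + 1), (P (j + 1) - P j)) = N k := by
      intro k
      rw [Finset.sum_range_sub P, hP0, hPsucc, sub_zero]
    have hlast : (∑ j ∈ Finset.range d, (P (j + 1) - P j)) = N (d - 1) := by
      conv_lhs => rw [show d = (d - 1) + 1 by omega]
      exact htel (d - 1)
    simp only [htel, hlast] at habel
    have h1 : ∑ k ∈ Finset.range d, N k = ∑ k : Fin d, (n k : ℝ) := by
      rw [← Fin.sum_univ_eq_sum_range N d]
      exact Finset.sum_congr rfl fun k _ => hNval k.val k.isLt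
    have h2 : ∑ k ∈ Finset.range d, N k * a k = ∑ k : Fin d, (n k : ℝ) * (s k).re := by
      rw [← Fin.sum_univ_eq_sum_range (fun k => N k * a k) d]
      refine Finset.sum_congr rfl fun k _ => ?_
      rw [hNval k.val k.isLt, hadef]
      simp [dif_pos k.isLt]
    have hNd1 : N (d - 1) = (n L : ℝ) := hNval (d - 1) hL
    rw [h1, h2, hNd1] at habel
    -- it remains: δ * ∑ n ≤ ε * n L
    have hbound : ∑ k : Fin d, (n k : ℝ) ≤ (d : ℝ) * (n L : ℝ) := by
      calc ∑ k : Fin d, (n k : ℝ) ≤ ∑ _k : Fin d, (n L : ℝ) := by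
            refine Finset.sum_le_sum fun k _ => ?_
            rw [Nat.cast_le]
            refine hmono ?_
            rw [Fin.le_def]
            have hk := k.isLt
            simp only [hLdef]
            omega
        _ = (d : ℝ) * (n L : ℝ) := by
            rw [Finset.sum_const, Finset.card_univ, Fintype.card_fin, nsmul_eq_mul]
    have hδS : δ * (∑ k : Fin d, (n k : ℝ)) ≤ ε * (n L : ℝ) := by
      rw [hδdef]
      calc ε / d * ∑ k : Fin d, (n k : ℝ) ≤ ε / d * ((d : ℝ) * (n L : ℝ)) := by
            apply mul_le_mul_of_nonneg_left hbound (by positivity)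
        _ = ε * (n L : ℝ) := by field_simp
    nlinarith [habel, hδS]
  calc ∑ k : Fin d, (n k : ℝ) * (-(s k)).re
      = -(∑ k : Fin d, (n k : ℝ) * (s k).re) := by
        rw [← Finset.sum_neg_distrib]
        exact Finset.sum_congr rfl fun k _ => by rw [Complex.neg_re]; ring
    _ ≤ -((1 + δ) * ∑ k : Fin d, (n k : ℝ)) := neg_le_neg hkey
    _ = ∑ k : Fin d, (-(1 + δ)) * (n k : ℝ) := by
        rw [Finset.mul_sum, ← Finset.sum_neg_distrib]
        exact Finset.sum_congr rfl fun k _ => by ring
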